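/- For every a ∈ ℝ, every μ > 0, and every r with 0 ≤ r < 1/μ, ∫_{a}^{∞} μ·exp(−μ(t−a))·min(r, max(0, a + 1/μ − t)) dt = r + (exp(−1) − exp(μ·r − 1))/μ. -/

import Mathlib

open MeasureTheory Real

/-- Equation (31) in Appendix D of the paper: the expected worst-case
per-packet under-utilization of a helper with shifted-exponential runtimes
(shift `a`, rate `μ`) and round-trip time `r < 1/μ` equals
`r + (e⁻¹ − e^{μr−1})/μ`. -/
theorem expected_underutilization_small_rtt
    (a : ℝ) (μ : ℝ) (hμ : 0 < μ) (r : ℝ) (hr0 : 0 ≤ r) (hr : r < 1 / μ) :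
    ∫ t in Set.Ioi a, μ * Real.exp (-μ * (t - a)) * min r (max 0 (a + 1 / μ - t))
      = r + (Real.exp (-1) - Real.exp (μ * r - 1)) / μ := by
  have hμ' : μ ≠ 0 := ne_of_gt hμ
  set f : ℝ → ℝ := fun t => μ * Real.exp (-μ * (t - a)) * min r (max 0 (a + 1 / μ - t)) with hf
  set b : ℝ := a + (1 / μ - r) with hb
  set c : ℝ := a + 1 / μ with hc
  have hab : a ≤ b := by rw [hb]; nlinarith
  have hbc : b ≤ c := by rw [hb, hc]; linarith
  have hac : a ≤ c := hab.trans hbc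
  have hexp : Continuous fun t : ℝ => Real.exp (-μ * (t - a)) :=
    Real.continuous_exp.comp (by fun_prop)
  have hcont : Continuous f := by
    apply Continuous.mul
    · exact continuous_const.mul hexp
    · exact continuous_const.min (continuous_const.max (by continuity))
  have h1 : ∫ t in Set.Ioi a, f t = ∫ t in Set.Ioc a c, f t := by
    have : ∫ t in Set.Ioi a, f t = ∫ t in Set.Ioi a, (Set.Ioc a c).indicator f t := by
      apply setIntegral_congr_fun measurableSet_Ioi
      intro t ht
      by_cases h : t ∈ Set.Ioc a c
      · rw [Set.indicator_of_mem h]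
      · rw [Set.indicator_of_notMem h]
        have htc : c < t := by
          rcases lt_or_ge c t with h' | h'
          · exact h'
          · exact absurd ⟨ht, h'⟩ h
        have : max 0 (a + 1 / μ - t) = 0 := by
          rw [max_eq_left]; rw [hc] at htc; linarith
        simp only [hf, hc, this, min_eq_right hr0, mul_zero]
    rw [this, setIntegral_indicator measurableSet_Ioc,
      Set.inter_eq_right.mpr Set.Ioc_subset_Ioi_self]
  have h2 : ∫ t in Set.Ioc a c, f t = ∫ t in a..c, f t := by
    rw [intervalIntegral.integral_of_le hac]
  have h3 : ∫ t in a..c, f t = (∫ t in a..b, f t) + ∫ t in b..c, f t := by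
    rw [intervalIntegral.integral_add_adjacent_intervals
      (hcont.intervalIntegrable a b) (hcont.intervalIntegrable b c)]
  -- first piece
  have h4 : ∫ t in a..b, f t = ∫ t in a..b, μ * Real.exp (-μ * (t - a)) * r := by
    apply intervalIntegral.integral_congr
    intro t ht
    rw [Set.uIcc_of_le hab] at ht
    have h1 : r ≤ a + 1 / μ - t := by
      have := ht.2; rw [hb] at this; linarith
    have h2 : (0:ℝ) ≤ a + 1 / μ - t := le_trans hr0 h1
    simp only [hf]
    rw [max_eq_right h2, min_eq_left h1]
  have h5 : ∫ t in a..b, μ * Real.exp (-μ * (t - a)) * r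
      = (fun t => -r * Real.exp (-μ * (t - a))) b - (fun t => -r * Real.exp (-μ * (t - a))) a := by
    apply intervalIntegral.integral_eq_sub_of_hasDerivAt (f := fun t => -r * Real.exp (-μ * (t - a)))
    · intro t ht
      have : HasDerivAt (fun t => -μ * (t - a)) (-μ) t := by
        simpa using ((hasDerivAt_id t).sub_const a).const_mul (-μ)
      have := (this.exp).const_mul (-r)
      refine this.congr_deriv ?_
      ring
    · exact ((continuous_const.mul hexp).mul continuous_const).intervalIntegrable a b
  -- second piece
  have h6 : ∫ t in b..c, f t = ∫ t in b..c, μ * Real.exp (-μ * (t - a)) * (a + 1 / μ - t) := by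
    apply intervalIntegral.integral_congr
    intro t ht
    rw [Set.uIcc_of_le hbc] at ht
    have h1 : a + 1 / μ - t ≤ r := by
      have := ht.1; rw [hb] at this; linarith
    have h2 : (0:ℝ) ≤ a + 1 / μ - t := by
      have := ht.2; rw [hc] at this; linarith
    simp only [hf]
    rw [max_eq_right h2, min_eq_right h1]
  have h7 : ∫ t in b..c, μ * Real.exp (-μ * (t - a)) * (a + 1 / μ - t)
      = (fun t => (t - a) * Real.exp (-μ * (t - a))) c - (fun t => (t - a) * Real.exp (-μ * (t - a))) b := by
    apply intervalIntegral.integral_eq_sub_of_hasDerivAt (f := fun t => (t - a) * Real.exp (-μ * (t - a)))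
    · intro t ht
      have hlin : HasDerivAt (fun t => -μ * (t - a)) (-μ) t := by
        simpa using ((hasDerivAt_id t).sub_const a).const_mul (-μ)
      have hsub : HasDerivAt (fun t : ℝ => t - a) 1 t := (hasDerivAt_id t).sub_const a
      have := hsub.mul hlin.exp
      refine this.congr_deriv ?_
      field_simp
      ring
    · exact ((continuous_const.mul hexp).mul (by fun_prop)).intervalIntegrable b c
  rw [h1, h2, h3, h4, h5, h6, h7]
  simp only [hb, hc]
  have e1 : -μ * (a + (1 / μ - r) - a) = μ * r - 1 := by field_simp; ring
  have e2 : -μ * (a + 1 / μ - a) = -1 := by field_simp; ring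
  have e3 : -μ * (a - a) = 0 := by ring
  rw [e1, e2, e3, Real.exp_zero]
  have : a + 1 / μ - a = 1 / μ := by ring
  rw [this]
  field_simp
  ring
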